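/- Let G be a connected graph, let u,v,w be vertices with {u,v} ∈ E(G) and {u,w} ∉ E(G), and let H = G − {u,v} + {u,w}. Suppose x is a unit eigenvector for λ_1(B_α(G)) with x_u > 0. If either (i) 0 ≤ α < 1/2 and x_w ≤ x_v < 0, or (ii) 1/2 < α ≤ 1 and 0 < x_v ≤ x_w, then λ_1(B_α(H)) > λ_1(B_α(G)). -/

import Mathlib

open Matrix

/-- The adjacency matrix of `G` over `ℝ`. -/
noncomputable def adjM {V : Type*} [Fintype V] [DecidableEq V]
    (G : SimpleGraph V) [DecidableRel G.Adj] : Matrix V V ℝ :=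
  G.adjMatrix ℝ

/-- The diagonal degree matrix of `G`. -/
noncomputable def degM {V : Type*} [Fintype V] [DecidableEq V]
    (G : SimpleGraph V) [DecidableRel G.Adj] : Matrix V V ℝ :=
  Matrix.diagonal fun v => (G.degree v : ℝ)

/-- The Laplacian matrix `L(G) = D(G) - A(G)`. -/
noncomputable def lapM {V : Type*} [Fintype V] [DecidableEq V]
    (G : SimpleGraph V) [DecidableRel G.Adj] : Matrix V V ℝ :=
  degM G - adjM G

/-- The matrix `B_α(G) = α A(G) + (1-α) L(G)`. -/
noncomputable def Balpha {V : Type*} [Fintype V] [DecidableEq V]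
    (G : SimpleGraph V) [DecidableRel G.Adj] (α : ℝ) : Matrix V V ℝ :=
  α • adjM G + (1 - α) • lapM G

section Aux

variable {V : Type*} [Fintype V] [DecidableEq V]

/-- `λ_max • 1 - M` is positive semidefinite for a real symmetric matrix. -/
lemma psd_aux [Nonempty V] {M : Matrix V V ℝ} (hM : M.IsHermitian) :
    PosSemidef (sSup (spectrum ℝ M) • (1 : Matrix V V ℝ) - M) := by
  set l := sSup (spectrum ℝ M) with hl
  have hle : ∀ i, hM.eigenvalues i ≤ l := by
    intro i
    apply le_csSup
    · rw [hM.spectrum_real_eq_range_eigenvalues]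
      exact (Set.finite_range _).bddAbove
    · exact hM.eigenvalues_mem_spectrum_real i
  have hU : (hM.eigenvectorUnitary : Matrix V V ℝ) *
      star (hM.eigenvectorUnitary : Matrix V V ℝ) = 1 :=
    Matrix.mem_unitaryGroup_iff.mp hM.eigenvectorUnitary.2
  have key : l • (1 : Matrix V V ℝ) - M =
      (hM.eigenvectorUnitary : Matrix V V ℝ) * diagonal (fun i => l - hM.eigenvalues i) *
        (hM.eigenvectorUnitary : Matrix V V ℝ)ᴴ := by
    have hd : diagonal (fun i => l - hM.eigenvalues i)
        = l • (1 : Matrix V V ℝ) - diagonal (RCLike.ofReal ∘ hM.eigenvalues) := by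
      ext i j
      by_cases h : i = j <;> simp [Matrix.diagonal_apply, Matrix.one_apply, h]
    rw [hd, Matrix.mul_sub, Matrix.sub_mul, ← Matrix.star_eq_conjTranspose]
    conv_lhs => rw [hM.spectral_theorem]
    rw [Unitary.conjStarAlgAut_apply]
    rw [mul_smul_comm, smul_mul_assoc, mul_one, hU]
  rw [key]
  exact (posSemidef_diagonal_iff.mpr (fun i => sub_nonneg.mpr (hle i))).mul_mul_conjTranspose_same _

lemma rayleigh_le {M : Matrix V V ℝ} (y : V → ℝ)
    (hpsd : PosSemidef (sSup (spectrum ℝ M) • (1 : Matrix V V ℝ) - M)) :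
    y ⬝ᵥ (M *ᵥ y) ≤ sSup (spectrum ℝ M) * (y ⬝ᵥ y) := by
  have h := hpsd.dotProduct_mulVec_nonneg y
  simp only [star_trivial, Matrix.sub_mulVec, Matrix.smul_mulVec, Matrix.one_mulVec,
    dotProduct_sub, dotProduct_smul, smul_eq_mul, RCLike.re_to_real] at h
  linarith

lemma rayleigh_eq {M : Matrix V V ℝ} (y : V → ℝ)
    (hpsd : PosSemidef (sSup (spectrum ℝ M) • (1 : Matrix V V ℝ) - M))
    (h : y ⬝ᵥ (M *ᵥ y) = sSup (spectrum ℝ M) * (y ⬝ᵥ y)) :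
    M *ᵥ y = sSup (spectrum ℝ M) • y := by
  have h0 : star y ⬝ᵥ ((sSup (spectrum ℝ M) • (1 : Matrix V V ℝ) - M) *ᵥ y) = 0 := by
    simp only [star_trivial, Matrix.sub_mulVec, Matrix.smul_mulVec, Matrix.one_mulVec,
      dotProduct_sub, dotProduct_smul, smul_eq_mul]
    linarith
  have h1 := (hpsd.dotProduct_mulVec_zero_iff y).mp h0
  rw [Matrix.sub_mulVec, Matrix.smul_mulVec, Matrix.one_mulVec, sub_eq_zero] at h1
  exact h1.symm

lemma adj_herm (G : SimpleGraph V) [DecidableRel G.Adj] : (adjM G).IsHermitian := by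
  unfold Matrix.IsHermitian adjM
  rw [conjTranspose_eq_transpose_of_trivial, SimpleGraph.transpose_adjMatrix]

lemma balpha_herm (G : SimpleGraph V) [DecidableRel G.Adj] (α : ℝ) :
    (Balpha G α).IsHermitian := by
  unfold Matrix.IsHermitian Balpha lapM degM
  rw [conjTranspose_add, conjTranspose_smul, conjTranspose_smul, conjTranspose_sub,
    adj_herm, (Matrix.isHermitian_diagonal _ : _)]
  norm_num

variable (G : SimpleGraph V) [DecidableRel G.Adj] (u v w : V)
    (H : SimpleGraph V) [DecidableRel H.Adj]

omit [Fintype V] [DecidableRel G.Adj] [DecidableRel H.Adj] in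
lemma adj_iff (hH : H.edgeSet = (G.edgeSet \ {s(u, v)}) ∪ {s(u, w)}) (a b : V) :
    H.Adj a b ↔ (G.Adj a b ∧ ¬((a = u ∧ b = v) ∨ (a = v ∧ b = u))) ∨
      ((a = u ∧ b = w) ∨ (a = w ∧ b = u)) := by
  rw [← SimpleGraph.mem_edgeSet, hH]
  simp [SimpleGraph.mem_edgeSet, Sym2.eq_iff, and_comm]
  tauto

omit [Fintype V] in
lemma adj_entry (huv : G.Adj u v) (hnuw : ¬ G.Adj u w) (huw : u ≠ w)
    (hH : H.edgeSet = (G.edgeSet \ {s(u, v)}) ∪ {s(u, w)}) (a b : V) :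
    H.adjMatrix ℝ a b = G.adjMatrix ℝ a b
      + ((if a = u ∧ b = w then (1:ℝ) else 0) + (if a = w ∧ b = u then 1 else 0)
        - (if a = u ∧ b = v then 1 else 0) - (if a = v ∧ b = u then 1 else 0)) := by
  have huv' : u ≠ v := G.ne_of_adj huv
  have hvw : v ≠ w := by rintro rfl; exact hnuw huv
  have hadj := adj_iff G u v w H hH a b
  have hwu : ¬ G.Adj w u := fun h => hnuw (G.adj_symm h)
  have hvu : G.Adj v u := G.adj_symm huv
  simp only [SimpleGraph.adjMatrix_apply, hadj]
  split_ifs <;> simp_all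

lemma deg_entry (huv : G.Adj u v) (hnuw : ¬ G.Adj u w) (huw : u ≠ w)
    (hH : H.edgeSet = (G.edgeSet \ {s(u, v)}) ∪ {s(u, w)}) (t : V) :
    (H.degree t : ℝ) = (G.degree t : ℝ)
      + ((if t = w then (1:ℝ) else 0) - (if t = v then 1 else 0)) := by
  have h1 : (H.degree t : ℝ) = ∑ s, H.adjMatrix ℝ t s := by
    simpa [Matrix.mulVec, dotProduct] using
      (SimpleGraph.adjMatrix_mulVec_const_apply (G := H) (α := ℝ) (a := 1) (v := t)).symm
  have h2 : (G.degree t : ℝ) = ∑ s, G.adjMatrix ℝ t s := by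
    simpa [Matrix.mulVec, dotProduct] using
      (SimpleGraph.adjMatrix_mulVec_const_apply (G := G) (α := ℝ) (a := 1) (v := t)).symm
  rw [h1, h2]
  have h3 : ∀ s, H.adjMatrix ℝ t s = G.adjMatrix ℝ t s
      + ((if t = u ∧ s = w then (1:ℝ) else 0) + (if t = w ∧ s = u then 1 else 0)
        - (if t = u ∧ s = v then 1 else 0) - (if t = v ∧ s = u then 1 else 0)) :=
    adj_entry G u v w H huv hnuw huw hH t
  simp only [h3]
  rw [Finset.sum_add_distrib]
  congr 1
  have huv' : u ≠ v := G.ne_of_adj huv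
  have hvw : v ≠ w := by rintro rfl; exact hnuw huv
  simp only [ite_and]
  rw [Finset.sum_sub_distrib, Finset.sum_sub_distrib, Finset.sum_add_distrib]
  by_cases h3 : t = u <;> by_cases h4 : t = w <;> by_cases h5 : t = v <;>
    simp_all [Finset.sum_ite_eq' Finset.univ]

end Aux

noncomputable def Dmat {V : Type*} [DecidableEq V] (α : ℝ) (u v w : V) : Matrix V V ℝ :=
  Matrix.of fun i j =>
    (1-α) * (if i = j then ((if i = w then (1:ℝ) else 0) - (if i = v then 1 else 0)) else 0)
    + (2*α-1) * ((if i = u ∧ j = w then 1 else 0) + (if i = w ∧ j = u then 1 else 0)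
      - (if i = u ∧ j = v then 1 else 0) - (if i = v ∧ j = u then 1 else 0))

lemma Dmat_mulVec {V : Type*} [Fintype V] [DecidableEq V] (α : ℝ) (u v w : V)
    (x : V → ℝ) (i : V) : (Dmat α u v w *ᵥ x) i =
    (1-α) * (((if i = w then (1:ℝ) else 0) - (if i = v then 1 else 0)) * x i)
    + (2*α-1) * ((if i = u then (1:ℝ) else 0) * x w + (if i = w then (1:ℝ) else 0) * x u
      - (if i = u then (1:ℝ) else 0) * x v - (if i = v then (1:ℝ) else 0) * x u) := by
  have hpt : ∀ j, Dmat α u v w i j * x j =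
      (1-α) * ((if i = j then ((if i = w then (1:ℝ) else 0) - (if i = v then 1 else 0)) * x j else 0))
      + (2*α-1) * ((if i = u then (1:ℝ) else 0) * (if j = w then x j else 0)
        + (if i = w then (1:ℝ) else 0) * (if j = u then x j else 0)
        - (if i = u then (1:ℝ) else 0) * (if j = v then x j else 0)
        - (if i = v then (1:ℝ) else 0) * (if j = u then x j else 0)) := by
    intro j
    simp only [Dmat, Matrix.of_apply, ite_and]
    split_ifs <;> ring
  have h1 : (Dmat α u v w *ᵥ x) i = ∑ j, Dmat α u v w i j * x j := rfl
  rw [h1, Finset.sum_congr rfl (fun j _ => hpt j)]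
  rw [Finset.sum_add_distrib]
  congr 1
  · rw [← Finset.mul_sum, Finset.sum_ite_eq Finset.univ i]
    simp
  · rw [← Finset.mul_sum]
    congr 1
    rw [Finset.sum_sub_distrib, Finset.sum_sub_distrib, Finset.sum_add_distrib]
    simp only [← Finset.mul_sum, Finset.sum_ite_eq' Finset.univ, Finset.mem_univ, if_true]

lemma balpha_eq {V : Type*} [Fintype V] [DecidableEq V]
    (G : SimpleGraph V) [DecidableRel G.Adj] (u v w : V)
    (H : SimpleGraph V) [DecidableRel H.Adj] (α : ℝ)
    (huv : G.Adj u v) (hnuw : ¬ G.Adj u w) (huw : u ≠ w)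
    (hH : H.edgeSet = (G.edgeSet \ {s(u, v)}) ∪ {s(u, w)}) :
    Balpha H α = Balpha G α + Dmat α u v w := by
  ext i j
  simp only [Balpha, adjM, lapM, degM, Dmat, Matrix.add_apply, Matrix.sub_apply,
    Matrix.smul_apply, Matrix.diagonal_apply, Matrix.of_apply, smul_eq_mul]
  rw [adj_entry G u v w H huv hnuw huw hH i j, deg_entry G u v w H huv hnuw huw hH i]
  split_ifs <;> ring

theorem stmt_19 {V : Type*} [Fintype V] [DecidableEq V]
    (G : SimpleGraph V) [DecidableRel G.Adj] (hconn : G.Connected)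
    (α : ℝ) (hα0 : 0 ≤ α) (hα1 : α ≤ 1)
    (u v w : V) (huw : u ≠ w)
    (huv : s(u, v) ∈ G.edgeSet) (hnuw : s(u, w) ∉ G.edgeSet)
    (H : SimpleGraph V) [DecidableRel H.Adj]
    (hH : H.edgeSet = (G.edgeSet \ {s(u, v)}) ∪ {s(u, w)})
    (x : V → ℝ) (hunit : x ⬝ᵥ x = 1)
    (heig : Balpha G α *ᵥ x = sSup (spectrum ℝ (Balpha G α)) • x)
    (hxu : 0 < x u)
    (hcase : (α < 1/2 ∧ x w ≤ x v ∧ x v < 0) ∨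
             (1/2 < α ∧ 0 < x v ∧ x v ≤ x w)) :
    sSup (spectrum ℝ (Balpha G α)) < sSup (spectrum ℝ (Balpha H α)) := by
  have : Nonempty V := ⟨u⟩
  have hGuv : G.Adj u v := huv
  have hnGuw : ¬ G.Adj u w := hnuw
  have huv' : u ≠ v := G.ne_of_adj hGuv
  have hvw : v ≠ w := by rintro rfl; exact hnGuw hGuv
  set lG := sSup (spectrum ℝ (Balpha G α)) with hlG
  set lH := sSup (spectrum ℝ (Balpha H α)) with hlH
  set Δ := Dmat α u v w with hΔdef
  have hBH : Balpha H α = Balpha G α + Δ := balpha_eq G u v w H α hGuv hnGuw huw hH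
  -- quadratic form of Δ
  have hquad : x ⬝ᵥ (Δ *ᵥ x) =
      (1-α) * (x w * x w - x v * x v) + (2*α-1) * (2 * (x u * (x w - x v))) := by
    have hp : ∀ i, x i * ((Δ *ᵥ x) i) =
        (1-α) * ((if i = w then x i * x i else 0) - (if i = v then x i * x i else 0))
        + (2*α-1) * ((if i = u then x i * x w else 0) + (if i = w then x i * x u else 0)
          - (if i = u then x i * x v else 0) - (if i = v then x i * x u else 0)) := by
      intro i
      rw [hΔdef, Dmat_mulVec α u v w x i]
      split_ifs <;> ring
    have h1 : x ⬝ᵥ (Δ *ᵥ x) = ∑ i, x i * (Δ *ᵥ x) i := rfl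
    rw [h1, Finset.sum_congr rfl (fun i _ => hp i)]
    rw [Finset.sum_add_distrib]
    simp only [Finset.sum_sub_distrib, Finset.sum_add_distrib, ← Finset.mul_sum,
      Finset.sum_ite_eq' Finset.univ, Finset.mem_univ, if_true]
    ring
  have hquad_nonneg : 0 ≤ x ⬝ᵥ (Δ *ᵥ x) := by
    rw [hquad]
    rcases hcase with ⟨h1, h2, h3⟩ | ⟨h1, h2, h3⟩
    · nlinarith [mul_nonneg (by linarith : (0:ℝ) ≤ 1 - α)
        (mul_nonneg (by linarith : (0:ℝ) ≤ x v - x w) (by linarith : (0:ℝ) ≤ -x w - x v)),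
        mul_nonneg (by linarith : (0:ℝ) ≤ 1 - 2*α)
        (mul_nonneg hxu.le (by linarith : (0:ℝ) ≤ x v - x w))]
    · nlinarith [mul_nonneg (by linarith : (0:ℝ) ≤ 1 - α)
        (mul_nonneg (by linarith : (0:ℝ) ≤ x w - x v) (by linarith : (0:ℝ) ≤ x w + x v)),
        mul_nonneg (by linarith : (0:ℝ) ≤ 2*α - 1)
        (mul_nonneg hxu.le (by linarith : (0:ℝ) ≤ x w - x v))]
  have hxG : x ⬝ᵥ (Balpha G α *ᵥ x) = lG := by
    rw [heig, dotProduct_smul, hunit, smul_eq_mul, mul_one]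
  have hxH : x ⬝ᵥ (Balpha H α *ᵥ x) = lG + x ⬝ᵥ (Δ *ᵥ x) := by
    rw [hBH, Matrix.add_mulVec, dotProduct_add, hxG]
  have hpsdH : PosSemidef (lH • (1 : Matrix V V ℝ) - Balpha H α) := psd_aux (balpha_herm H α)
  have hray : x ⬝ᵥ (Balpha H α *ᵥ x) ≤ lH * (x ⬝ᵥ x) := rayleigh_le x hpsdH
  rw [hunit, mul_one] at hray
  have hle : lG ≤ lH := by rw [hxH] at hray; linarith
  rcases lt_or_eq_of_le hle with h | h
  · exact h
  · exfalso
    have hquad0 : x ⬝ᵥ (Δ *ᵥ x) = 0 := by rw [hxH] at hray; linarith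
    have heq : x ⬝ᵥ (Balpha H α *ᵥ x) = lH * (x ⬝ᵥ x) := by
      rw [hunit, mul_one, hxH, hquad0, add_zero, h]
    have heigH : Balpha H α *ᵥ x = lH • x := rayleigh_eq x hpsdH heq
    have hΔ0 : Δ *ᵥ x = 0 := by
      have h2 : Balpha G α *ᵥ x + Δ *ᵥ x = lH • x := by
        rw [← Matrix.add_mulVec, ← hBH, heigH]
      rw [heig, h] at h2
      exact add_eq_left.mp h2
    have hw0 : (1-α) * x w + (2*α-1) * x u = 0 := by
      have h3 := congrFun hΔ0 w
      rw [hΔdef] at h3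
      rw [Dmat_mulVec α u v w x w] at h3
      simp only [if_pos rfl, if_neg (Ne.symm huw), if_neg (Ne.symm hvw), Pi.zero_apply] at h3
      norm_num at h3
      linarith
    rcases hcase with ⟨h1, h2, h3⟩ | ⟨h1, h2, h3⟩
    · nlinarith
    · nlinarith
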